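/- arXiv:1912.00525 — 2 statements merged into one kernel-verified Lean document; each statement's English description precedes it below -/
import Mathlib

section
/- The coefficients A_ℓ(N,M) satisfy the three-term recursion (ℓ+2) A_{ℓ+1}(N,M) = (2ℓ+1)(N+M) A_ℓ(N,M) + (ℓ-1)(ℓ² - (M-N)²) A_{ℓ-1}(N,M) for all ℓ ≥ 1, with initial data A_0(N,M) = N and A_1(N,M) = N·M. -/
open Finset

/-- Rising factorial (Pochhammer symbol) `(x)_n = x(x+1)⋯(x+n-1)`. -/
noncomputable def poch (x : ℝ) (n : ℕ) : ℝ := (ascPochhammer ℝ n).eval x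

/-- The LUE one-point coefficients `A_ℓ(N,M)`:
`A_0 = N`, and for `ℓ ≥ 1`,
`A_ℓ(N,M) = (1/ℓ) ∑_{j=0}^{ℓ-1} (-1)^j (N-j)_ℓ (M-j)_ℓ / (j!(ℓ-1-j)!)`. -/
noncomputable def A (N M : ℝ) : ℕ → ℝ
  | 0 => N
  | (ℓ + 1) => (1 / ((ℓ : ℝ) + 1)) * ∑ j ∈ range (ℓ + 1),
      (-1 : ℝ) ^ j * poch (N - j) (ℓ + 1) * poch (M - j) (ℓ + 1) /
        ((j.factorial : ℝ) * ((ℓ - j).factorial : ℝ))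

/- ### Auxiliary machinery -/

lemma poch_zero' (x : ℝ) : poch x 0 = 1 := by simp [poch]

lemma poch_succ (x : ℝ) (n : ℕ) : poch x (n+1) = poch x n * (x + n) := by
  simp [poch, ascPochhammer_succ_right]

lemma poch_succ_left (x : ℝ) (n : ℕ) : poch x (n+1) = x * poch (x+1) n := by
  simp [poch, ascPochhammer_succ_left, Polynomial.eval_comp]

lemma A_succ (N M : ℝ) (n : ℕ) : A N M (n+1) = (1 / ((n : ℝ) + 1)) * ∑ j ∈ range (n + 1),
    (-1 : ℝ) ^ j * poch (N - j) (n + 1) * poch (M - j) (n + 1) /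
      ((j.factorial : ℝ) * ((n - j).factorial : ℝ)) := rfl

/-- The common "kernel" of the three sums, at level `ℓ = K+2`. -/
noncomputable def kk (N M : ℝ) (K : ℕ) (j : ℕ) : ℝ :=
  (-1:ℝ)^j * poch (N-j) (K+1) * poch (M-j) (K+1) /
    ((j.factorial : ℝ) * (((K+2-j).factorial : ℕ) : ℝ))

/-- The combined polynomial whose `kk`-weighted sum must vanish. -/
def Pc (n m l x : ℝ) : ℝ :=
  l*(l+2)*((n-x+l-1)*(n-x+l)*(m-x+l-1)*(m-x+l))
  - (l+1)*(2*l+1)*(n+m)*((n-x+l-1)*(m-x+l-1)*(l-x))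
  - (l+1)*l*(l^2-(m-n)^2)*((l-x)*(l-1-x))

/-- The Zeilberger certificate polynomial. -/
def Qc (n m l x : ℝ) : ℝ :=
  (l^2-3*l^4+2*l^5 - m*l+m*l^2-2*m*l^3+2*m*l^4 + m^2*l-m^2*l^2 - n*l+n*l^2-2*n*l^3+2*n*l^4
    - 2*n*m+5*n*m*l-n*m*l^2+n*m*l^3 + 2*n*m^2-2*n*m^2*l-n*m^2*l^2 + n^2*l-n^2*l^2
    + 2*n^2*m-2*n^2*m*l-n^2*m*l^2 - 2*n^2*m^2-n^2*m^2*l)*x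
  + (-l+l^2+7*l^3-7*l^4 + m-3*m*l+4*m*l^2-5*m*l^3 - m^2+2*m^2*l + n-3*n*l+4*n*l^2-5*n*l^3
    - 6*n*m+5*n*m*l-n*m*l^2 + 3*n*m^2+n*m^2*l - n^2+2*n^2*l + 3*n^2*m+n^2*m*l)*x^2
  + (-l-5*l^2+9*l^3 + 2*m-3*m*l+4*m*l^2 - m^2 + 2*n-3*n*l+4*n*l^2 - 4*n*m - n^2)*x^3
  + (l-5*l^2 + m-m*l + n-n*l)*x^4 + l*x^5

lemma keyA (n m l x : ℝ) :
    (n-x+l-2)*(m-x+l-2)*(x+1)*(Pc n m l x + Qc n m l x)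
      + (n-x-1)*(m-x-1)*(l-x)*(Qc n m l (x+1)) = 0 := by
  simp only [Pc, Qc]; ring

lemma keyB (n m l : ℝ) : Pc n m l l + Qc n m l l = 0 := by
  simp only [Pc, Qc]; ring

lemma keyC (n m l : ℝ) : Qc n m l 0 = 0 := by simp only [Qc]; ring

lemma step_core (c e f n m l x d1 d2 : ℝ) (hd1 : d1 ≠ 0) (hd2 : d2 ≠ 0)
    (hlx : l - x ≠ 0) (hx1 : x + 1 ≠ 0) :
    c * (e*(n-x+l-2)) * (f*(m-x+l-2)) / (d1 * ((l-x)*d2)) * Pc n m l x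
      = (-c) * ((n-x-1)*e) * ((m-x-1)*f) / (((x+1)*d1) * d2) * Qc n m l (x+1)
        - c * (e*(n-x+l-2)) * (f*(m-x+l-2)) / (d1 * ((l-x)*d2)) * Qc n m l x := by
  have hD1 : d1 * ((l-x)*d2) ≠ 0 := mul_ne_zero hd1 (mul_ne_zero hlx hd2)
  have hD2 : ((x+1)*d1) * d2 ≠ 0 := mul_ne_zero (mul_ne_zero hx1 hd1) hd2
  have h : (c * (e*(n-x+l-2)) * (f*(m-x+l-2)) * (Pc n m l x + Qc n m l x)) / (d1 * ((l-x)*d2))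
      + (c * ((n-x-1)*e) * ((m-x-1)*f) * Qc n m l (x+1)) / (((x+1)*d1) * d2) = 0 := by
    rw [div_add_div _ _ hD1 hD2, div_eq_zero_iff]
    left
    linear_combination (c*e*f*d1*d2) * keyA n m l x
  linear_combination h

lemma fact2 (K j : ℕ) (hj : j ≤ K+1) :
    (((K+2-j).factorial : ℕ) : ℝ) = (((K:ℝ)+2) - (j:ℝ)) * (((K+1-j).factorial : ℕ) : ℝ) := by
  have h1 : K + 2 - j = (K + 1 - j) + 1 := by omega
  have hc : ((K + 1 - j : ℕ) : ℝ) = (K:ℝ) + 1 - (j:ℝ) := by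
    rw [Nat.cast_sub hj]; push_cast; ring
  rw [h1, Nat.factorial_succ]; push_cast [hc]; ring

lemma fact1 (K j : ℕ) (hj : j ≤ K) :
    (((K+1-j).factorial : ℕ) : ℝ) = (((K:ℝ)+1) - (j:ℝ)) * (((K-j).factorial : ℕ) : ℝ) := by
  have h1 : K + 1 - j = (K - j) + 1 := by omega
  have hc : ((K - j : ℕ) : ℝ) = (K:ℝ) - (j:ℝ) := by rw [Nat.cast_sub hj]
  rw [h1, Nat.factorial_succ]; push_cast [hc]; ring

lemma step (N M : ℝ) (K j : ℕ) (hj : j ≤ K+1) :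
    kk N M K j * Pc N M ((K:ℝ)+2) j
      = kk N M K (j+1) * Qc N M ((K:ℝ)+2) ((j:ℝ)+1) - kk N M K j * Qc N M ((K:ℝ)+2) j := by
  have h2 : K + 2 - (j+1) = K + 1 - j := by omega
  have hpN := poch_succ (N - (j:ℝ)) K
  have hpM := poch_succ (M - (j:ℝ)) K
  have hpN' : poch (N - ((j:ℝ)+1)) (K+1) = (N - ((j:ℝ)+1)) * poch (N - (j:ℝ)) K := by
    have h := poch_succ_left (N - ((j:ℝ)+1)) K
    have harg : N - ((j:ℝ)+1) + 1 = N - (j:ℝ) := by ring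
    rw [harg] at h; exact h
  have hpM' : poch (M - ((j:ℝ)+1)) (K+1) = (M - ((j:ℝ)+1)) * poch (M - (j:ℝ)) K := by
    have h := poch_succ_left (M - ((j:ℝ)+1)) K
    have harg : M - ((j:ℝ)+1) + 1 = M - (j:ℝ) := by ring
    rw [harg] at h; exact h
  have hd1 : ((j.factorial : ℕ) : ℝ) ≠ 0 := by positivity
  have hd2 : (((K+1-j).factorial : ℕ) : ℝ) ≠ 0 := by positivity
  have hd3 : ((K:ℝ)+2) - (j:ℝ) ≠ 0 := by
    have hjc : (j:ℝ) ≤ (K:ℝ)+1 := by exact_mod_cast hj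
    nlinarith
  have hd4 : ((j:ℝ)+1) ≠ 0 := by positivity
  have hcore := step_core ((-1:ℝ)^j) (poch (N-(j:ℝ)) K) (poch (M-(j:ℝ)) K) N M ((K:ℝ)+2) (j:ℝ)
    ((j.factorial : ℝ)) (((K+1-j).factorial : ℝ)) hd1 hd2 hd3 hd4
  simp only [kk, fact2 K j hj, h2]
  push_cast
  rw [hpN, hpM, hpN', hpM', Nat.factorial_succ, pow_succ]
  push_cast
  linear_combination hcore

lemma sumP (N M : ℝ) (K : ℕ) :
    ∑ j ∈ range (K+3), kk N M K j * Pc N M ((K:ℝ)+2) (j:ℝ) = 0 := by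
  have hcong : ∀ j ∈ range (K+2), kk N M K j * Pc N M ((K:ℝ)+2) (j:ℝ)
      = (fun i => kk N M K i * Qc N M ((K:ℝ)+2) (i:ℝ)) (j+1)
        - (fun i => kk N M K i * Qc N M ((K:ℝ)+2) (i:ℝ)) j := by
    intro j hj
    have hj' : j ≤ K+1 := by have := Finset.mem_range.mp hj; omega
    have h := step N M K j hj'
    push_cast
    convert h using 3
  rw [Finset.sum_range_succ, Finset.sum_congr rfl hcong,
    Finset.sum_range_sub (fun i => kk N M K i * Qc N M ((K:ℝ)+2) (i:ℝ)) (K+2)]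
  push_cast
  have h0 : Qc N M ((K:ℝ)+2) 0 = 0 := keyC N M _
  rw [h0]
  linear_combination (kk N M K (K+2)) * keyB N M ((K:ℝ)+2)

lemma conv3 (N M : ℝ) (K : ℕ) :
    ∑ j ∈ range (K+2+1), (-1:ℝ)^j * poch (N-j) (K+2+1) * poch (M-j) (K+2+1) /
        ((j.factorial : ℝ) * (((K+2-j).factorial : ℕ) : ℝ))
      = ∑ j ∈ range (K+3), kk N M K j *
          ((N-(j:ℝ)+((K:ℝ)+1))*(N-(j:ℝ)+((K:ℝ)+2))*(M-(j:ℝ)+((K:ℝ)+1))*(M-(j:ℝ)+((K:ℝ)+2))) := by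
  refine Finset.sum_congr rfl fun j hj => ?_
  have pN : poch (N-(j:ℝ)) (K+3) = poch (N-(j:ℝ)) (K+1) *
      ((N-(j:ℝ)+((K:ℝ)+1)) * (N-(j:ℝ)+((K:ℝ)+2))) := by
    have h1 : poch (N-(j:ℝ)) (K+3) = poch (N-(j:ℝ)) (K+2) * (N-(j:ℝ)+((K+2:ℕ):ℝ)) :=
      poch_succ _ (K+2)
    have h2 : poch (N-(j:ℝ)) (K+2) = poch (N-(j:ℝ)) (K+1) * (N-(j:ℝ)+((K+1:ℕ):ℝ)) :=
      poch_succ _ (K+1)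
    rw [h1, h2]; push_cast; ring
  have pM : poch (M-(j:ℝ)) (K+3) = poch (M-(j:ℝ)) (K+1) *
      ((M-(j:ℝ)+((K:ℝ)+1)) * (M-(j:ℝ)+((K:ℝ)+2))) := by
    have h1 : poch (M-(j:ℝ)) (K+3) = poch (M-(j:ℝ)) (K+2) * (M-(j:ℝ)+((K+2:ℕ):ℝ)) :=
      poch_succ _ (K+2)
    have h2 : poch (M-(j:ℝ)) (K+2) = poch (M-(j:ℝ)) (K+1) * (M-(j:ℝ)+((K+1:ℕ):ℝ)) :=
      poch_succ _ (K+1)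
    rw [h1, h2]; push_cast; ring
  show (-1:ℝ)^j * poch (N-(j:ℝ)) (K+3) * poch (M-(j:ℝ)) (K+3) / _ = _
  rw [pN, pM]
  simp only [kk]
  ring

lemma conv2 (N M : ℝ) (K : ℕ) :
    ∑ j ∈ range (K+1+1), (-1:ℝ)^j * poch (N-j) (K+1+1) * poch (M-j) (K+1+1) /
        ((j.factorial : ℝ) * (((K+1-j).factorial : ℕ) : ℝ))
      = ∑ j ∈ range (K+3), kk N M K j *
          ((N-(j:ℝ)+((K:ℝ)+1))*(M-(j:ℝ)+((K:ℝ)+1))*(((K:ℝ)+2)-(j:ℝ))) := by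
  rw [Finset.sum_range_succ (n := K+2)]
  have hlast : kk N M K (K+2) *
      ((N-((K+2:ℕ):ℝ)+((K:ℝ)+1))*(M-((K+2:ℕ):ℝ)+((K:ℝ)+1))*(((K:ℝ)+2)-((K+2:ℕ):ℝ))) = 0 := by
    have hz : ((K:ℝ)+2)-((K+2:ℕ):ℝ) = 0 := by push_cast; ring
    rw [hz]; ring
  rw [hlast, add_zero]
  refine Finset.sum_congr rfl fun j hj => ?_
  have hj' : j ≤ K + 1 := by have := Finset.mem_range.mp hj; omega
  have pN : poch (N-(j:ℝ)) (K+2) = poch (N-(j:ℝ)) (K+1) * (N-(j:ℝ)+((K+1:ℕ):ℝ)) :=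
    poch_succ _ (K+1)
  have pM : poch (M-(j:ℝ)) (K+2) = poch (M-(j:ℝ)) (K+1) * (M-(j:ℝ)+((K+1:ℕ):ℝ)) :=
    poch_succ _ (K+1)
  have hd1 : ((j.factorial : ℕ) : ℝ) ≠ 0 := by positivity
  have hd2 : (((K+1-j).factorial : ℕ) : ℝ) ≠ 0 := by positivity
  have hd3 : ((K:ℝ)+2) - (j:ℝ) ≠ 0 := by
    have hjc : (j:ℝ) ≤ (K:ℝ)+1 := by exact_mod_cast hj'
    nlinarith
  show (-1:ℝ)^j * poch (N-(j:ℝ)) (K+2) * poch (M-(j:ℝ)) (K+2) / _ = _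
  rw [pN, pM]
  simp only [kk, fact2 K j hj']
  push_cast
  field_simp

lemma conv1 (N M : ℝ) (K : ℕ) :
    ∑ j ∈ range (K+1), (-1:ℝ)^j * poch (N-j) (K+1) * poch (M-j) (K+1) /
        ((j.factorial : ℝ) * (((K-j).factorial : ℕ) : ℝ))
      = ∑ j ∈ range (K+3), kk N M K j *
          ((((K:ℝ)+2)-(j:ℝ))*(((K:ℝ)+1)-(j:ℝ))) := by
  rw [Finset.sum_range_succ (n := K+2), Finset.sum_range_succ (n := K+1)]
  have hz2 : ((K:ℝ)+2)-((K+2:ℕ):ℝ) = 0 := by push_cast; ring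
  have hz1 : ((K:ℝ)+1)-((K+1:ℕ):ℝ) = 0 := by push_cast; ring
  rw [hz2]
  rw [show (((K:ℝ)+1)-((K+1:ℕ):ℝ)) = 0 from hz1]
  simp only [mul_zero, zero_mul, add_zero]
  refine Finset.sum_congr rfl fun j hj => ?_
  have hj' : j ≤ K := by have := Finset.mem_range.mp hj; omega
  have hd1 : ((j.factorial : ℕ) : ℝ) ≠ 0 := by positivity
  have hd2 : (((K-j).factorial : ℕ) : ℝ) ≠ 0 := by positivity
  have hd3 : ((K:ℝ)+2) - (j:ℝ) ≠ 0 := by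
    have hjc : (j:ℝ) ≤ (K:ℝ) := by exact_mod_cast hj'
    nlinarith
  have hd4 : ((K:ℝ)+1) - (j:ℝ) ≠ 0 := by
    have hjc : (j:ℝ) ≤ (K:ℝ) := by exact_mod_cast hj'
    nlinarith
  simp only [kk, fact2 K j (by omega), fact1 K j hj']
  field_simp

lemma split (N M : ℝ) (K : ℕ) :
    ∑ j ∈ range (K+3), kk N M K j * Pc N M ((K:ℝ)+2) (j:ℝ)
      = (((K:ℝ)+2)*((K:ℝ)+4)) * (∑ j ∈ range (K+3), kk N M K j *
          ((N-(j:ℝ)+((K:ℝ)+1))*(N-(j:ℝ)+((K:ℝ)+2))*(M-(j:ℝ)+((K:ℝ)+1))*(M-(j:ℝ)+((K:ℝ)+2))))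
        - (((K:ℝ)+3)*(2*(K:ℝ)+5)*(N+M)) * (∑ j ∈ range (K+3), kk N M K j *
          ((N-(j:ℝ)+((K:ℝ)+1))*(M-(j:ℝ)+((K:ℝ)+1))*(((K:ℝ)+2)-(j:ℝ))))
        - (((K:ℝ)+3)*((K:ℝ)+2)*((((K:ℝ)+2))^2-(M-N)^2)) * (∑ j ∈ range (K+3), kk N M K j *
          ((((K:ℝ)+2)-(j:ℝ))*(((K:ℝ)+1)-(j:ℝ)))) := by
  rw [Finset.mul_sum, Finset.mul_sum, Finset.mul_sum, ← Finset.sum_sub_distrib,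
    ← Finset.sum_sub_distrib]
  refine Finset.sum_congr rfl fun j hj => ?_
  simp only [Pc]
  ring

theorem A_three_term_recursion (N M : ℝ) :
    A N M 0 = N ∧ A N M 1 = N * M ∧
    ∀ ℓ : ℕ, 1 ≤ ℓ →
      ((ℓ : ℝ) + 2) * A N M (ℓ + 1)
        = (2 * (ℓ : ℝ) + 1) * (N + M) * A N M ℓ
          + ((ℓ : ℝ) - 1) * ((ℓ : ℝ) ^ 2 - (M - N) ^ 2) * A N M (ℓ - 1) := by
  refine ⟨rfl, ?_, ?_⟩
  · rw [show (1:ℕ) = 0+1 from rfl, A_succ]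
    norm_num [poch_succ, poch_zero']
  · intro ℓ hℓ
    rcases Nat.lt_or_ge ℓ 2 with h | h
    · interval_cases ℓ
      rw [show (1:ℕ)+1 = 0+1+1 from rfl, A_succ, A_succ]
      norm_num [Finset.sum_range_succ, poch_succ, poch_zero']
      ring
    · obtain ⟨K, rfl⟩ : ∃ K, ℓ = K+2 := ⟨ℓ-2, by omega⟩
      have e3 := A_succ N M (K+2)
      have e2 : A N M (K+2) = (1 / ((K:ℝ)+1 + 1)) * ∑ j ∈ range (K+1+1),
          (-1 : ℝ) ^ j * poch (N - j) (K+1+1) * poch (M - j) (K+1+1) /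
            ((j.factorial : ℝ) * ((K+1 - j).factorial : ℝ)) := by
        have := A_succ N M (K+1)
        push_cast at this ⊢
        convert this using 2
      have e1 : A N M (K+2-1) = (1 / ((K:ℝ) + 1)) * ∑ j ∈ range (K+1),
          (-1 : ℝ) ^ j * poch (N - j) (K+1) * poch (M - j) (K+1) /
            ((j.factorial : ℝ) * ((K - j).factorial : ℝ)) := by
        have := A_succ N M K
        rw [show K+2-1 = K+1 from rfl]
        exact this
      rw [e3, e2, e1, conv3, conv2, conv1]
      have key : (((K:ℝ)+2)*((K:ℝ)+4)) * (∑ j ∈ range (K+3), kk N M K j *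
            ((N-(j:ℝ)+((K:ℝ)+1))*(N-(j:ℝ)+((K:ℝ)+2))*(M-(j:ℝ)+((K:ℝ)+1))*(M-(j:ℝ)+((K:ℝ)+2))))
          - (((K:ℝ)+3)*(2*(K:ℝ)+5)*(N+M)) * (∑ j ∈ range (K+3), kk N M K j *
            ((N-(j:ℝ)+((K:ℝ)+1))*(M-(j:ℝ)+((K:ℝ)+1))*(((K:ℝ)+2)-(j:ℝ))))
          - (((K:ℝ)+3)*((K:ℝ)+2)*((((K:ℝ)+2))^2-(M-N)^2)) * (∑ j ∈ range (K+3), kk N M K j *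
            ((((K:ℝ)+2)-(j:ℝ))*(((K:ℝ)+1)-(j:ℝ)))) = 0 := by
        rw [← split]; exact sumP N M K
      have h1 : ((K:ℝ)+2+1) ≠ 0 := by positivity
      have h2 : ((K:ℝ)+1+1) ≠ 0 := by positivity
      have h3 : ((K:ℝ)+1) ≠ 0 := by positivity
      generalize (∑ j ∈ range (K+3), kk N M K j *
            ((N-(j:ℝ)+((K:ℝ)+1))*(N-(j:ℝ)+((K:ℝ)+2))*(M-(j:ℝ)+((K:ℝ)+1))*(M-(j:ℝ)+((K:ℝ)+2)))) = S3 at key ⊢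
      generalize (∑ j ∈ range (K+3), kk N M K j *
            ((N-(j:ℝ)+((K:ℝ)+1))*(M-(j:ℝ)+((K:ℝ)+1))*(((K:ℝ)+2)-(j:ℝ)))) = S2 at key ⊢
      generalize (∑ j ∈ range (K+3), kk N M K j *
            ((((K:ℝ)+2)-(j:ℝ))*(((K:ℝ)+1)-(j:ℝ)))) = S1 at key ⊢
      push_cast
      field_simp
      linear_combination (((K:ℝ)+1)) * key
end

section
/- Similarly, the coefficient of N^ℓ in B_ℓ(N, cN) (as a polynomial in N with coefficients in ℚ[c]) equals ∑_{b=0}^{ℓ} C(ℓ,b)² c^b. -/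
open Finset Polynomial

-- ring hom commutes with ascPochhammer evaluation
lemma asc_hom_eval {S T : Type*} [Semiring S] [Semiring T] (ψ : S →+* T) (n : ℕ) (x : S) :
    ψ ((ascPochhammer S n).eval x) = (ascPochhammer T n).eval (ψ x) := by
  rw [← ascPochhammer_map ψ n, eval_map, eval₂_at_apply]

lemma asc_eval_prod {S : Type*} [CommSemiring S] (n : ℕ) (x : S) :
    (ascPochhammer S n).eval x = ∏ i ∈ range n, (x + i) := by
  induction n with
  | zero => simp
  | succ n ih => rw [ascPochhammer_succ_eval, ih, prod_range_succ]

lemma coeff_eval₂_C_mul_X {A B : Type*} [CommSemiring A] [CommSemiring B]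
    (φ : A →+* B) (r : B) (p : A[X]) (b : ℕ) :
    (eval₂ ((C : B →+* B[X]).comp φ) (C r * X) p).coeff b = φ (p.coeff b) * r ^ b := by
  rw [eval₂_eq_sum, Polynomial.sum, finset_sum_coeff]
  have key : ∀ e ∈ p.support, (((C : B →+* B[X]).comp φ) (p.coeff e) * (C r * X) ^ e).coeff b
      = if b = e then φ (p.coeff e) * r ^ e else 0 := by
    intro e _
    rw [mul_pow, ← C_pow, RingHom.comp_apply, ← mul_assoc, ← C_mul, coeff_C_mul, coeff_X_pow,
      mul_ite, mul_one, mul_zero]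
  rw [Finset.sum_congr rfl key, Finset.sum_ite_eq]
  by_cases hb : b ∈ p.support
  · simp [hb]
  · simp only [hb, if_false]
    rw [Polynomial.notMem_support_iff.mp hb, map_zero, zero_mul]

/-- `G ℓ` : the polynomial `(Y - j)_ℓ` where `Y` is the outer variable and the
inner variable plays the role of `j`. -/
noncomputable def Gpoly (ℓ : ℕ) : Polynomial (Polynomial ℚ) :=
  (ascPochhammer (Polynomial (Polynomial ℚ)) ℓ).eval (X - C X)

lemma Gpoly_eq (ℓ : ℕ) :
    Gpoly ℓ = ∏ i ∈ range ℓ, (X + C ((i : Polynomial ℚ) - X)) := by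
  rw [Gpoly, asc_eval_prod]
  refine prod_congr rfl fun i _ => ?_
  rw [map_sub, ← C_eq_natCast]
  ring

lemma Gpoly_coeff (ℓ a : ℕ) (ha : a ≤ ℓ) :
    (Gpoly ℓ).coeff a
      = ∑ t ∈ (range ℓ).powersetCard (ℓ - a), ∏ i ∈ t, ((i : Polynomial ℚ) - X) := by
  rw [Gpoly_eq]
  have := Finset.prod_X_add_C_coeff (range ℓ) (fun i => ((i : Polynomial ℚ) - X))
    (k := a) (by simpa using ha)
  simpa using this

lemma Gpoly_coeff_natDegree_le (ℓ a : ℕ) (ha : a ≤ ℓ) :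
    ((Gpoly ℓ).coeff a).natDegree ≤ ℓ - a := by
  rw [Gpoly_coeff ℓ a ha]
  apply natDegree_sum_le_of_forall_le
  intro t ht
  have hcard : t.card = ℓ - a := (Finset.mem_powersetCard.mp ht).2
  refine (natDegree_prod_le _ _).trans ?_
  calc ∑ i ∈ t, ((i : Polynomial ℚ) - X).natDegree ≤ ∑ _i ∈ t, 1 := by
        refine Finset.sum_le_sum fun i _ => ?_
        refine (natDegree_sub_le _ _).trans ?_
        simp [natDegree_X]
    _ = ℓ - a := by simp [hcard]

lemma prod_sub_coeff_card (t : Finset ℕ) :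
    (∏ i ∈ t, ((i : Polynomial ℚ) - X)).coeff t.card = (-1 : ℚ) ^ t.card := by
  have h1 : (∏ i ∈ t, ((i : Polynomial ℚ) - X))
      = (-1 : Polynomial ℚ) ^ t.card * ∏ i ∈ t, (X - C (i : ℚ)) := by
    rw [← Finset.prod_const, ← Finset.prod_mul_distrib]
    refine prod_congr rfl fun i _ => ?_
    rw [C_eq_natCast]
    ring
  have hm : (∏ i ∈ t, (X - C (i : ℚ))).Monic :=
    monic_prod_of_monic _ _ fun i _ => monic_X_sub_C _
  have hdeg : (∏ i ∈ t, (X - C (i : ℚ))).natDegree = t.card := by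
    rw [natDegree_prod _ _ fun i _ => X_sub_C_ne_zero _]
    simp only [natDegree_X_sub_C, Finset.sum_const, smul_eq_mul, mul_one]
  have h2 : (∏ i ∈ t, (X - C (i : ℚ))).coeff t.card = 1 := by
    rw [← hdeg]; exact hm.coeff_natDegree
  rw [h1, ← map_one (C : ℚ →+* Polynomial ℚ), ← map_neg, ← map_pow, coeff_C_mul, h2, mul_one]

lemma Gpoly_coeff_top (ℓ a : ℕ) (ha : a ≤ ℓ) :
    ((Gpoly ℓ).coeff a).coeff (ℓ - a) = (-1 : ℚ) ^ (ℓ - a) * (ℓ.choose (ℓ - a)) := by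
  rw [Gpoly_coeff ℓ a ha, finset_sum_coeff]
  have key : ∀ t ∈ (range ℓ).powersetCard (ℓ - a),
      (∏ i ∈ t, ((i : Polynomial ℚ) - X)).coeff (ℓ - a) = (-1 : ℚ) ^ (ℓ - a) := by
    intro t ht
    have hcard : t.card = ℓ - a := (Finset.mem_powersetCard.mp ht).2
    rw [← hcard, prod_sub_coeff_card]
  rw [Finset.sum_congr rfl key, Finset.sum_const, Finset.card_powersetCard, Finset.card_range]
  simp [mul_comm]

lemma alt_sum_eval : ∀ n : ℕ, ∀ p : Polynomial ℚ, p.natDegree ≤ n →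
    ∑ j ∈ range (n + 1), (-1 : ℚ) ^ j * (n.choose j) * p.eval (j : ℚ)
      = (-1) ^ n * (n.factorial : ℚ) * p.coeff n := by
  intro n
  induction n with
  | zero =>
    intro p hp
    simp [coeff_zero_eq_eval_zero]
  | succ n ih =>
    intro p hp
    set q : Polynomial ℚ := taylor 1 p - p with hq
    have hqd : q.natDegree ≤ n := by
      rw [natDegree_le_iff_coeff_eq_zero]
      intro m hm
      have h1 : (taylor (1 : ℚ) p).coeff m = p.coeff m := by
        rw [taylor_coeff]
        have hdeg : (hasseDeriv m p).natDegree < 1 := by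
          have h := natDegree_hasseDeriv_le p m
          omega
        rw [eval_eq_sum_range' hdeg]
        simp [hasseDeriv_coeff]
      simp [hq, coeff_sub, h1]
    have hqc : q.coeff n = ((n : ℚ) + 1) * p.coeff (n + 1) := by
      rw [hq, coeff_sub, taylor_coeff]
      have hdeg : (hasseDeriv n p).natDegree < 2 := by
        have h := natDegree_hasseDeriv_le p n
        omega
      rw [eval_eq_sum_range' hdeg]
      simp [hasseDeriv_coeff, Finset.sum_range_succ, Nat.choose_succ_self_right,
        Nat.add_comm 1 n]
    have hqe : ∀ j : ℕ, q.eval (j : ℚ) = p.eval ((j : ℚ) + 1) - p.eval (j : ℚ) := by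
      intro j
      simp [hq, taylor_eval]
    have key : ∑ j ∈ range (n + 2), (-1 : ℚ) ^ j * ((n+1).choose j) * p.eval (j : ℚ)
        = - ∑ j ∈ range (n + 1), (-1 : ℚ) ^ j * (n.choose j) * q.eval (j : ℚ) := by
      have h2 := Finset.sum_range_succ'
        (fun j => (-1 : ℚ) ^ j * (n.choose j) * p.eval (j : ℚ)) (n + 1)
      have h3 := Finset.sum_range_succ
        (fun j => (-1 : ℚ) ^ j * (n.choose j) * p.eval (j : ℚ)) (n + 1)
      rw [Finset.sum_range_succ'
        (fun j => (-1 : ℚ) ^ j * ((n+1).choose j) * p.eval (j : ℚ)) (n + 1)]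
      have h4 : ∑ i ∈ range (n+1), (-1:ℚ)^(i+1) * (((n+1).choose (i+1) : ℕ)) * p.eval ((i+1:ℕ):ℚ)
          = ∑ i ∈ range (n+1), ((-1:ℚ)^(i+1) * ((n.choose (i+1) : ℕ)) * p.eval ((i+1:ℕ):ℚ)
              - (-1:ℚ)^i * ((n.choose i : ℕ)) * p.eval ((i+1:ℕ):ℚ)) := by
        refine Finset.sum_congr rfl fun i _ => ?_
        push_cast [Nat.choose_succ_succ']
        ring
      rw [h4, Finset.sum_sub_distrib]
      have hz : ((-1:ℚ)) ^ (n+1) * (n.choose (n+1) : ℕ) * p.eval ((n+1 : ℕ) : ℚ) = 0 := by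
        simp [Nat.choose_succ_self]
      have h6 : ∑ j ∈ range (n+1), (-1:ℚ)^j * (n.choose j : ℕ) * q.eval (j:ℚ)
          = ∑ j ∈ range (n+1), (-1:ℚ)^j * (n.choose j : ℕ) * p.eval ((j+1:ℕ):ℚ)
            - ∑ j ∈ range (n+1), (-1:ℚ)^j * (n.choose j : ℕ) * p.eval (j:ℚ) := by
        rw [← Finset.sum_sub_distrib]
        refine Finset.sum_congr rfl fun j _ => ?_
        rw [hqe j]
        push_cast
        ring
      rw [h3] at h2
      simp only [pow_zero, Nat.choose_zero_right, Nat.cast_one, one_mul, Nat.cast_zero,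
        Nat.cast_ofNat] at h2 ⊢
      rw [hz] at h2
      linarith [h2, h6]
    rw [key, ih q hqd, hqc]
    push_cast [Nat.factorial_succ]
    ring

lemma core_identity (ℓ k : ℕ) (hk : k ≤ ℓ) :
    ∑ j ∈ range (ℓ + 1), ((-1 : ℚ) ^ j / ((j.factorial : ℚ) * ((ℓ - j).factorial : ℚ)))
        * ((Gpoly ℓ).coeff k).eval (j : ℚ) * ((Gpoly ℓ).coeff (ℓ - k)).eval (j : ℚ)
      = (ℓ.choose (ℓ - k) : ℚ) ^ 2 := by
  set p : Polynomial ℚ := (Gpoly ℓ).coeff k * (Gpoly ℓ).coeff (ℓ - k) with hp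
  have hd : p.natDegree ≤ ℓ := by
    refine natDegree_mul_le.trans ?_
    have h1 := Gpoly_coeff_natDegree_le ℓ k hk
    have h2 := Gpoly_coeff_natDegree_le ℓ (ℓ - k) (Nat.sub_le _ _)
    omega
  have hc : p.coeff ℓ = (-1 : ℚ) ^ ℓ * (ℓ.choose (ℓ - k) : ℚ) ^ 2 := by
    have hsum : (ℓ - k) + k = ℓ := Nat.sub_add_cancel hk
    have hmul := coeff_mul_add_eq_of_natDegree_le (f := (Gpoly ℓ).coeff k) (g := (Gpoly ℓ).coeff (ℓ - k))
      (Gpoly_coeff_natDegree_le ℓ k hk)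
      (by simpa [Nat.sub_sub_self hk] using Gpoly_coeff_natDegree_le ℓ (ℓ - k) (Nat.sub_le _ _))
    rw [hsum] at hmul
    have h2 : ((Gpoly ℓ).coeff (ℓ - k)).coeff k = (-1 : ℚ) ^ k * (ℓ.choose k : ℚ) := by
      have := Gpoly_coeff_top ℓ (ℓ - k) (Nat.sub_le _ _)
      rwa [Nat.sub_sub_self hk] at this
    have hpow : (-1 : ℚ) ^ (ℓ - k) * (-1 : ℚ) ^ k = (-1 : ℚ) ^ ℓ := by
      rw [← pow_add, hsum]
    rw [hp, hmul, Gpoly_coeff_top ℓ k hk, h2, Nat.choose_symm hk]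
    linear_combination ((ℓ.choose k : ℚ) ^ 2) * hpow
  have halt := alt_sum_eval ℓ p hd
  have hfac : (ℓ.factorial : ℚ) ≠ 0 := by positivity
  have h1 : ∑ j ∈ range (ℓ + 1), ((-1 : ℚ) ^ j / ((j.factorial : ℚ) * ((ℓ - j).factorial : ℚ)))
        * ((Gpoly ℓ).coeff k).eval (j : ℚ) * ((Gpoly ℓ).coeff (ℓ - k)).eval (j : ℚ)
      = (∑ j ∈ range (ℓ + 1), (-1 : ℚ) ^ j * (ℓ.choose j) * p.eval (j : ℚ)) / ℓ.factorial := by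
    rw [Finset.sum_div]
    refine Finset.sum_congr rfl fun j hj => ?_
    have hj' : j ≤ ℓ := Nat.lt_succ_iff.mp (Finset.mem_range.mp hj)
    have hfj : (ℓ.factorial : ℚ) = (ℓ.choose j : ℚ) * ((j.factorial : ℚ) * ((ℓ - j).factorial : ℚ)) := by
      rw [← Nat.choose_mul_factorial_mul_factorial hj']
      push_cast
      ring
    have h2 : ((j.factorial : ℚ)) ≠ 0 := by positivity
    have h3 : (((ℓ - j).factorial : ℚ)) ≠ 0 := by positivity
    have h4 : ((ℓ.choose j : ℚ)) ≠ 0 := by exact_mod_cast (Nat.choose_pos hj').ne'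
    rw [hp, eval_mul, hfj]
    field_simp
  rw [h1, halt, hc]
  have heven : (-1 : ℚ) ^ ℓ * (-1 : ℚ) ^ ℓ = 1 := by
    rw [← pow_add]
    exact Even.neg_one_pow ⟨ℓ, rfl⟩
  rw [div_eq_iff hfac]
  linear_combination ((ℓ.factorial : ℚ) * (ℓ.choose (ℓ - k) : ℚ) ^ 2) * heven

/-- `B_ℓ(N, cN)` as a polynomial in `N` with coefficients in `ℚ[c]`
(outer variable `X` is `N`, inner variable is `c`):
`B_ℓ(N,M) = ∑_{j=0}^{ℓ} (-1)^j (N-j)_ℓ (M-j)_ℓ / (j!(ℓ-j)!)` with `M = cN`. -/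
noncomputable def BPoly (ℓ : ℕ) : Polynomial (Polynomial ℚ) :=
  ∑ j ∈ range (ℓ + 1),
    C (C ((-1 : ℚ) ^ j / ((j.factorial : ℚ) * ((ℓ - j).factorial : ℚ)))) *
      (ascPochhammer (Polynomial (Polynomial ℚ)) ℓ).eval (X - C (C (j : ℚ))) *
      (ascPochhammer (Polynomial (Polynomial ℚ)) ℓ).eval
        (C (Polynomial.X : Polynomial ℚ) * X - C (C (j : ℚ)))

/-- The coefficient of `N^ℓ` in `B_ℓ(N,cN)` is `∑_{b=0}^ℓ C(ℓ,b)² c^b`. -/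
theorem BPoly_leading_coeff (ℓ : ℕ) :
    (BPoly ℓ).coeff ℓ
      = ∑ b ∈ range (ℓ + 1), C ((ℓ.choose b : ℚ) ^ 2) * X ^ b := by

  classical
  have main : ∀ j : ℕ,
      (C (C ((-1 : ℚ) ^ j / ((j.factorial : ℚ) * ((ℓ - j).factorial : ℚ)))) *
        (ascPochhammer (Polynomial (Polynomial ℚ)) ℓ).eval (X - C (C (j : ℚ))) *
        (ascPochhammer (Polynomial (Polynomial ℚ)) ℓ).eval (C (Polynomial.X : Polynomial ℚ) * X - C (C (j : ℚ)))).coeff ℓ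
      = ∑ k ∈ range (ℓ + 1),
          C (((-1 : ℚ) ^ j / ((j.factorial : ℚ) * ((ℓ - j).factorial : ℚ)))
              * ((Gpoly ℓ).coeff k).eval (j : ℚ) * ((Gpoly ℓ).coeff (ℓ - k)).eval (j : ℚ))
            * X ^ (ℓ - k) := by
    intro j
    set φ : Polynomial ℚ →+* Polynomial ℚ := (C : ℚ →+* Polynomial ℚ).comp (evalRingHom (j : ℚ)) with hφ
    have hφX : φ (Polynomial.X : Polynomial ℚ) = C (j : ℚ) := by simp [hφ, coe_evalRingHom]
    -- first factor
    have e1 : (ascPochhammer (Polynomial (Polynomial ℚ)) ℓ).eval (X - C (C (j : ℚ))) = (Gpoly ℓ).map φ := by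
      have h := asc_hom_eval (mapRingHom φ) ℓ (X - C Polynomial.X)
      simp only [coe_mapRingHom, Polynomial.map_sub, map_X, map_C, hφX] at h
      rw [Gpoly, h]
    -- second factor
    have e2 : (ascPochhammer (Polynomial (Polynomial ℚ)) ℓ).eval (C (Polynomial.X : Polynomial ℚ) * X - C (C (j : ℚ)))
        = eval₂ ((C : Polynomial ℚ →+* Polynomial (Polynomial ℚ)).comp φ) (C (Polynomial.X : Polynomial ℚ) * X) (Gpoly ℓ) := by
      have h := asc_hom_eval (eval₂RingHom ((C : Polynomial ℚ →+* Polynomial (Polynomial ℚ)).comp φ) (C (Polynomial.X : Polynomial ℚ) * X))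
        ℓ (X - C Polynomial.X)
      simp only [coe_eval₂RingHom, eval₂_sub, eval₂_X, eval₂_C, RingHom.comp_apply, hφX] at h
      rw [Gpoly, h]
    have c1 : ∀ a : ℕ, ((ascPochhammer (Polynomial (Polynomial ℚ)) ℓ).eval (X - C (C (j : ℚ)))).coeff a
        = C (((Gpoly ℓ).coeff a).eval (j : ℚ)) := by
      intro a
      rw [e1, coeff_map, hφ]
      simp [coe_evalRingHom]
    have c2 : ∀ b : ℕ, ((ascPochhammer (Polynomial (Polynomial ℚ)) ℓ).eval
          (C (Polynomial.X : Polynomial ℚ) * X - C (C (j : ℚ)))).coeff b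
        = C (((Gpoly ℓ).coeff b).eval (j : ℚ)) * Polynomial.X ^ b := by
      intro b
      rw [e2, coeff_eval₂_C_mul_X φ (Polynomial.X : Polynomial ℚ) (Gpoly ℓ) b, hφ]
      simp [coe_evalRingHom]
    rw [mul_assoc, coeff_C_mul, coeff_mul,
      Finset.Nat.sum_antidiagonal_eq_sum_range_succ_mk, Finset.mul_sum]
    refine Finset.sum_congr rfl fun k _ => ?_
    simp only [c1, c2, ← mul_assoc, ← C_mul]
  rw [BPoly, finset_sum_coeff]
  rw [Finset.sum_congr rfl fun j _ => main j, Finset.sum_comm]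
  rw [← Finset.sum_range_reflect (fun b => C ((ℓ.choose b : ℚ) ^ 2) * X ^ b) (ℓ + 1)]
  refine Finset.sum_congr rfl fun k hk => ?_
  have hk' : k ≤ ℓ := Nat.lt_succ_iff.mp (Finset.mem_range.mp hk)
  have hrefl : ℓ + 1 - 1 - k = ℓ - k := by omega
  rw [hrefl, ← Finset.sum_mul, ← map_sum C, core_identity ℓ k hk']
end
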